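/- Let G be a topological group acting continuously on topological spaces X and Y, and let k ≥ 1 be an integer. If X and Y are G-homotopy equivalent — that is, there exist continuous G-equivariant maps f : X → Y and g : Y → X such that g ∘ f is G-homotopic to the identity of X and f ∘ g is G-homotopic to the identity of Y — then TC^{G,k}(X) = TC^{G,k}(Y). -/

import Mathlib

open Set

/-- The space of `k`-tuples of paths in `X` that are consecutive up to the `G`-action:
the `(i+1)`-st path starts in the `G`-orbit of the endpoint of the `i`-th path. -/
def effPk (G X : Type*) [Group G] [TopologicalSpace X] [MulAction G X] (k : ℕ) :
    Set (Fin k → C(unitInterval, X)) :=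
  {γ | ∀ (i : ℕ) (h : i + 1 < k),
    γ ⟨i + 1, h⟩ 0 ∈ MulAction.orbit G (γ ⟨i, Nat.lt_of_succ_lt h⟩ 1)}

/-- A `(G,k)`-motion planner on `U ⊆ X × X`: a continuous section over `U` of the map
`π_k` sending a `k`-tuple of consecutive-up-to-`G` paths to its (start, end) pair. -/
def IsEffPlanner (G X : Type*) [Group G] [TopologicalSpace X] [MulAction G X]
    (k : ℕ) (hk : 0 < k) (U : Set (X × X)) : Prop :=
  ∃ s : U → (Fin k → C(unitInterval, X)),
    Continuous s ∧ (∀ u, s u ∈ effPk G X k) ∧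
    ∀ u : U, (s u ⟨0, hk⟩) 0 = (u : X × X).1 ∧
      (s u ⟨k - 1, Nat.sub_lt hk Nat.one_pos⟩) 1 = (u : X × X).2

/-- `TC^{G,k}(X)`: the least `ℓ ≥ 1` such that `X × X` admits an open cover by `ℓ` sets,
each admitting a `(G,k)`-motion planner; `∞` if there is no such `ℓ`. -/
noncomputable def effTC (G X : Type*) [Group G] [TopologicalSpace X] [MulAction G X]
    (k : ℕ) (hk : 0 < k) : ℕ∞ :=
  sInf {ℓ : ℕ∞ | ∃ n : ℕ, ℓ = n ∧ 1 ≤ n ∧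
    ∃ U : Fin n → Set (X × X), (∀ i, IsOpen (U i)) ∧ (⋃ i, U i) = Set.univ ∧
      ∀ i, IsEffPlanner G X k hk (U i)}

/-- Effective topological complexity `TC^{G,∞}(X)`: the minimum of `TC^{G,k}(X)` over `k ≥ 1`. -/
noncomputable def effTCinf (G X : Type*) [Group G] [TopologicalSpace X] [MulAction G X] : ℕ∞ :=
  ⨅ k : ℕ, effTC G X (k + 1) k.succ_pos

/-- Farber's (non-reduced) topological complexity `TC(X)`. -/
noncomputable def farberTC (X : Type*) [TopologicalSpace X] : ℕ∞ :=
  sInf {ℓ : ℕ∞ | ∃ n : ℕ, ℓ = n ∧ 1 ≤ n ∧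
    ∃ U : Fin n → Set (X × X), (∀ i, IsOpen (U i)) ∧ (⋃ i, U i) = Set.univ ∧
      ∀ i, ∃ s : (U i) → C(unitInterval, X), Continuous s ∧
        ∀ u : (U i), (s u) 0 = (u : X × X).1 ∧ (s u) 1 = (u : X × X).2}

section AuxConcat

variable {Z X : Type*} [TopologicalSpace Z] [TopologicalSpace X]

/-- Concatenation of two continuous maps on the unit interval with matching endpoints. -/
noncomputable def cmTrans (α β : C(unitInterval, X)) (h : α 1 = β 0) : C(unitInterval, X) :=
  ((⟨α, rfl, rfl⟩ : Path (α 0) (α 1)).trans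
    ((⟨β, rfl, rfl⟩ : Path (β 0) (β 1)).cast h rfl)).toContinuousMap

lemma cmTrans_zero (α β : C(unitInterval, X)) (h : α 1 = β 0) : cmTrans α β h 0 = α 0 :=
  Path.source _

lemma cmTrans_one (α β : C(unitInterval, X)) (h : α 1 = β 0) : cmTrans α β h 1 = β 1 :=
  Path.target _

lemma continuous_cmTrans {α β : Z → C(unitInterval, X)} (hα : Continuous α) (hβ : Continuous β)
    {h : ∀ z, α z 1 = β z 0} :
    Continuous fun z => cmTrans (α z) (β z) (h z) := by
  apply ContinuousMap.continuous_of_continuous_uncurry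
  have h1 : Continuous ↿(fun z => (⟨α z, rfl, rfl⟩ : Path (α z 0) (α z 1))) :=
    (hα.comp continuous_fst).eval continuous_snd
  have h2 : Continuous ↿(fun z =>
      ((⟨β z, rfl, rfl⟩ : Path (β z 0) (β z 1)).cast (h z) rfl)) :=
    (hβ.comp continuous_fst).eval continuous_snd
  exact Path.trans_continuous_family _ h1 _ h2

end AuxConcat

section AuxPlanner

variable {X Y : Type*} [TopologicalSpace X] [TopologicalSpace Y]

/-- The `i`-th path of the pulled-back motion planner: `g ∘ γ`, prepended with the
correction path `p` if `i = 0` and appended with the correction path `q` if `i = k-1`. -/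
noncomputable def plannerPath (g : C(Y, X)) (k : ℕ) (i : Fin k) (γ : C(unitInterval, Y))
    (p q : C(unitInterval, X))
    (h0 : (i : ℕ) = 0 → p 1 = g (γ 0)) (h1 : (i : ℕ) = k - 1 → g (γ 1) = q 0) :
    C(unitInterval, X) :=
  if hi1 : (i : ℕ) = k - 1 then
    cmTrans (if hi0 : (i : ℕ) = 0 then cmTrans p (g.comp γ) (h0 hi0) else g.comp γ) q
      (by split_ifs with hi0
          · exact (cmTrans_one _ _ _).trans (h1 hi1)
          · exact h1 hi1)
  else if hi0 : (i : ℕ) = 0 then cmTrans p (g.comp γ) (h0 hi0) else g.comp γ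

lemma plannerPath_zero (g : C(Y, X)) (k : ℕ) (i : Fin k) (γ : C(unitInterval, Y))
    (p q : C(unitInterval, X)) (h0 h1) (hi0 : (i : ℕ) = 0) :
    plannerPath g k i γ p q h0 h1 0 = p 0 := by
  unfold plannerPath
  split_ifs <;> first | omega | simp [cmTrans_zero, cmTrans_one]

lemma plannerPath_zero' (g : C(Y, X)) (k : ℕ) (i : Fin k) (γ : C(unitInterval, Y))
    (p q : C(unitInterval, X)) (h0 h1) (hi0 : (i : ℕ) ≠ 0) :
    plannerPath g k i γ p q h0 h1 0 = g (γ 0) := by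
  unfold plannerPath
  split_ifs <;> first | omega | simp [cmTrans_zero, cmTrans_one]

lemma plannerPath_one (g : C(Y, X)) (k : ℕ) (i : Fin k) (γ : C(unitInterval, Y))
    (p q : C(unitInterval, X)) (h0 h1) (hi1 : (i : ℕ) = k - 1) :
    plannerPath g k i γ p q h0 h1 1 = q 1 := by
  unfold plannerPath
  split_ifs <;> first | omega | simp [cmTrans_zero, cmTrans_one]

lemma plannerPath_one' (g : C(Y, X)) (k : ℕ) (i : Fin k) (γ : C(unitInterval, Y))
    (p q : C(unitInterval, X)) (h0 h1) (hi1 : (i : ℕ) ≠ k - 1) :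
    plannerPath g k i γ p q h0 h1 1 = g (γ 1) := by
  unfold plannerPath
  split_ifs <;> first | omega | simp [cmTrans_zero, cmTrans_one]

lemma continuous_plannerPath {Z : Type*} [TopologicalSpace Z] (g : C(Y, X)) (k : ℕ) (i : Fin k)
    {γ : Z → C(unitInterval, Y)} {p q : Z → C(unitInterval, X)}
    (hγ : Continuous γ) (hp : Continuous p) (hq : Continuous q)
    {h0 : ∀ z, (i : ℕ) = 0 → p z 1 = g (γ z 0)} {h1 : ∀ z, (i : ℕ) = k - 1 → g (γ z 1) = q z 0} :
    Continuous fun z => plannerPath g k i (γ z) (p z) (q z) (h0 z) (h1 z) := by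
  have hgγ : Continuous fun z => g.comp (γ z) := (ContinuousMap.continuous_postcomp g).comp hγ
  by_cases hi1 : (i : ℕ) = k - 1
  · by_cases hi0 : (i : ℕ) = 0
    · simp only [plannerPath, dif_pos hi1, dif_pos hi0]
      exact continuous_cmTrans (continuous_cmTrans hp hgγ) hq
    · simp only [plannerPath, dif_pos hi1, dif_neg hi0]
      exact continuous_cmTrans hgγ hq
  · by_cases hi0 : (i : ℕ) = 0
    · simp only [plannerPath, dif_neg hi1, dif_pos hi0]
      exact continuous_cmTrans hp hgγ
    · simp only [plannerPath, dif_neg hi1, dif_neg hi0]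
      exact hgγ

end AuxPlanner

lemma isEffPlanner_preimage {G X Y : Type*} [Group G] [TopologicalSpace X] [TopologicalSpace Y]
    [MulAction G X] [MulAction G Y]
    (f : C(X, Y)) (g : C(Y, X)) (hg : ∀ (a : G) (y : Y), g (a • y) = a • g y)
    (F : ContinuousMap.Homotopy (g.comp f) (ContinuousMap.id X))
    (k : ℕ) (hk : 0 < k) (U : Set (Y × Y)) (hU : IsEffPlanner G Y k hk U) :
    IsEffPlanner G X k hk ((fun p : X × X => (f p.1, f p.2)) ⁻¹' U) := by
  classical
  obtain ⟨s, hs_cont, hs_mem, hs_end⟩ := hU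
  set V : Set (X × X) := (fun p : X × X => (f p.1, f p.2)) ⁻¹' U with hVdef
  have hfu : Continuous (fun v : V => (⟨(f (v : X × X).1, f (v : X × X).2), v.2⟩ : U)) :=
    Continuous.subtype_mk
      ((f.continuous.comp (continuous_fst.comp continuous_subtype_val)).prodMk
        (f.continuous.comp (continuous_snd.comp continuous_subtype_val))) _
  set fu : V → U := fun v => ⟨(f (v : X × X).1, f (v : X × X).2), v.2⟩ with hfudef
  set c : V → Fin k → C(unitInterval, Y) := fun v => s (fu v) with hcdef
  have hc : ∀ i, Continuous fun v => c v i := fun i =>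
    (continuous_apply i).comp (hs_cont.comp hfu)
  set Fp : X → C(unitInterval, X) :=
    fun x => ⟨fun t => F (t, x), (map_continuous F).comp (continuous_id.prodMk continuous_const)⟩
    with hFpdef
  set Fq : X → C(unitInterval, X) :=
    fun x => ⟨fun t => F (unitInterval.symm t, x),
      (map_continuous F).comp (unitInterval.continuous_symm.prodMk continuous_const)⟩
    with hFqdef
  have hFp : Continuous Fp :=
    ContinuousMap.continuous_of_continuous_uncurry _
      ((map_continuous F).comp (continuous_snd.prodMk continuous_fst))
  have hFq : Continuous Fq :=
    ContinuousMap.continuous_of_continuous_uncurry _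
      ((map_continuous F).comp
        ((unitInterval.continuous_symm.comp continuous_snd).prodMk continuous_fst))
  have hFp0 : ∀ x : X, Fp x 0 = g (f x) := fun x => F.apply_zero x
  have hFp1 : ∀ x : X, Fp x 1 = x := fun x => F.apply_one x
  have hFq0 : ∀ x : X, Fq x 0 = x := fun x => by
    show F (unitInterval.symm 0, x) = x
    rw [unitInterval.symm_zero]; exact F.apply_one x
  have hFq1 : ∀ x : X, Fq x 1 = g (f x) := fun x => by
    show F (unitInterval.symm 1, x) = g (f x)
    rw [unitInterval.symm_one]; exact F.apply_zero x
  have key0 : ∀ (v : V) (i : Fin k), (i : ℕ) = 0 →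
      Fq (v : X × X).1 1 = g (c v i 0) := by
    intro v i h0
    have hi : i = ⟨0, hk⟩ := Fin.ext h0
    rw [hi, hFq1, (hs_end (fu v)).1]
  have key1 : ∀ (v : V) (i : Fin k), (i : ℕ) = k - 1 →
      g (c v i 1) = Fp (v : X × X).2 0 := by
    intro v i h1
    have hi : i = ⟨k - 1, Nat.sub_lt hk Nat.one_pos⟩ := Fin.ext h1
    rw [hi, hFp0, (hs_end (fu v)).2]
  refine ⟨fun v i => plannerPath g k i (c v i) (Fq (v : X × X).1) (Fp (v : X × X).2)
      (key0 v i) (key1 v i), ?_, ?_, ?_⟩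
  · apply continuous_pi
    intro i
    exact continuous_plannerPath g k i (hc i)
      (hFq.comp (continuous_fst.comp continuous_subtype_val))
      (hFp.comp (continuous_snd.comp continuous_subtype_val))
  · intro v i hik
    have h1 : ((⟨i + 1, hik⟩ : Fin k) : ℕ) ≠ 0 := by simp
    have h2 : ((⟨i, Nat.lt_of_succ_lt hik⟩ : Fin k) : ℕ) ≠ k - 1 := by
      simp only []; omega
    rw [plannerPath_zero' _ _ _ _ _ _ _ _ h1, plannerPath_one' _ _ _ _ _ _ _ _ h2]
    obtain ⟨a, ha⟩ := hs_mem (fu v) i hik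
    refine ⟨a, ?_⟩
    show a • g ((c v ⟨i, Nat.lt_of_succ_lt hik⟩) 1) = g ((c v ⟨i + 1, hik⟩) 0)
    rw [← hg]
    exact congrArg g ha
  · intro v
    constructor
    · rw [plannerPath_zero _ _ _ _ _ _ _ _ rfl, hFq0]
    · rw [plannerPath_one _ _ _ _ _ _ _ _ rfl, hFp1]

lemma effTC_le_of_maps {G X Y : Type*} [Group G] [TopologicalSpace X] [TopologicalSpace Y]
    [MulAction G X] [MulAction G Y]
    (f : C(X, Y)) (g : C(Y, X)) (hg : ∀ (a : G) (y : Y), g (a • y) = a • g y)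
    (F : ContinuousMap.Homotopy (g.comp f) (ContinuousMap.id X))
    (k : ℕ) (hk : 0 < k) :
    effTC G X k hk ≤ effTC G Y k hk := by
  apply sInf_le_sInf
  rintro ℓ ⟨n, rfl, hn, U, hopen, hcover, hplan⟩
  refine ⟨n, rfl, hn, fun i => (fun p : X × X => (f p.1, f p.2)) ⁻¹' (U i), ?_, ?_, ?_⟩
  · intro i
    exact (hopen i).preimage ((f.continuous.comp continuous_fst).prodMk
      (f.continuous.comp continuous_snd))
  · apply Set.eq_univ_of_forall
    intro p
    have : (f p.1, f p.2) ∈ ⋃ i, U i := hcover ▸ Set.mem_univ _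
    obtain ⟨_, ⟨i, rfl⟩, hi⟩ := this
    exact Set.mem_iUnion.2 ⟨i, hi⟩
  · intro i
    exact isEffPlanner_preimage f g hg F k hk (U i) (hplan i)

/-- If `X` and `Y` are `G`-homotopy equivalent — i.e. there are continuous
`G`-equivariant maps `f : X → Y` and `g : Y → X` together with `G`-homotopies from `g ∘ f` to
`id_X` and from `f ∘ g` to `id_Y` — then `TC^{G,k}(X) = TC^{G,k}(Y)` for every `k ≥ 1`. -/
theorem effTC_eq_of_G_homotopy_equiv {G : Type*} [Group G] [TopologicalSpace G]
    [IsTopologicalGroup G] {X Y : Type*} [TopologicalSpace X] [TopologicalSpace Y]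
    [MulAction G X] [MulAction G Y] [ContinuousSMul G X] [ContinuousSMul G Y]
    (f : C(X, Y)) (g : C(Y, X))
    (hf : ∀ (a : G) (x : X), f (a • x) = a • f x)
    (hg : ∀ (a : G) (y : Y), g (a • y) = a • g y)
    (F : ContinuousMap.Homotopy (g.comp f) (ContinuousMap.id X))
    (hF : ∀ (a : G) (x : X) (t : unitInterval), F (t, a • x) = a • F (t, x))
    (K : ContinuousMap.Homotopy (f.comp g) (ContinuousMap.id Y))
    (hK : ∀ (a : G) (y : Y) (t : unitInterval), K (t, a • y) = a • K (t, y))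
    (k : ℕ) (hk : 1 ≤ k) :
    effTC G X k hk = effTC G Y k hk := by
  exact le_antisymm (effTC_le_of_maps f g hg F k hk) (effTC_le_of_maps g f hf K k hk)
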